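/- PAC bound for a single classifier with two-level sampling: let L_1,...,L_m be i.i.d. [0,1]-valued random variables with mean L_D and variance (1/n)·V₁ + V₂ (arising from averaging n conditionally-i.i.d. losses per rater). Then for any δ ∈ (0,1], with probability at least 1−δ, |L_D − (1/m)∑ L_i| ≤ (1/(3m))·[g + √(g² + 18 g m ((1/n)V₁ + V₂))], where g = ln(2/δ). -/

import Mathlib

open MeasureTheory ProbabilityTheory Real Nat

lemma exp_tsum' (y : ℝ) : Real.exp y = ∑' n : ℕ, y ^ n / n ! := by
  rw [Real.exp_eq_exp_ℝ, NormedSpace.exp_eq_tsum_div]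

lemma summable_shift (y : ℝ) (j : ℕ) : Summable (fun k : ℕ => y ^ (k + j) / (k + j)!) := by
  exact (Real.summable_pow_div_factorial y).comp_injective (add_left_injective j)

lemma exp_sub_one_sub (y : ℝ) :
    Real.exp y - 1 - y = ∑' k : ℕ, y ^ (k + 2) / (k + 2)! := by
  have h := exp_tsum' y
  rw [(Real.summable_pow_div_factorial y).tsum_eq_zero_add] at h
  rw [(summable_shift y 1).tsum_eq_zero_add] at h
  simp only [pow_zero, Nat.factorial_zero, Nat.cast_one, div_one, pow_one,
    Nat.factorial_one] at h
  have : ∀ b : ℕ, y ^ (b + 1 + 1) / ((b + 1 + 1)! : ℝ) = y ^ (b + 2) / ((b + 2)! : ℝ) := by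
    intro b; norm_num
  rw [h, tsum_congr this]
  simp [Nat.factorial_one]

lemma aux1 (t x : ℝ) (ht : 0 ≤ t) (hx : |x| ≤ 1) :
    Real.exp (t * x) ≤ 1 + t * x + x ^ 2 * (Real.exp t - 1 - t) := by
  have h1 : Real.exp (t * x) - 1 - t * x = ∑' k : ℕ, (t * x) ^ (k + 2) / (k + 2)! := by
    simpa using exp_sub_one_sub (t * x)
  have h2 := exp_sub_one_sub t
  have hterm : ∀ k : ℕ, (t * x) ^ (k + 2) / ((k + 2)! : ℝ) ≤ x ^ 2 * (t ^ (k + 2) / (k + 2)!) := by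
    intro k
    rw [← mul_div_assoc]
    gcongr ?_ / _
    have hxk : x ^ (k + 2) ≤ x ^ 2 := by
      calc x ^ (k + 2) ≤ |x ^ (k + 2)| := le_abs_self _
      _ = |x| ^ k * |x| ^ 2 := by rw [abs_pow, pow_add]
      _ = |x| ^ k * x ^ 2 := by rw [sq_abs]
      _ ≤ 1 * x ^ 2 := by
          gcongr
          exact pow_le_one₀ (abs_nonneg x) hx
      _ = x ^ 2 := one_mul _
    calc (t * x) ^ (k + 2) = t ^ (k + 2) * x ^ (k + 2) := mul_pow _ _ _
      _ ≤ t ^ (k + 2) * x ^ 2 := mul_le_mul_of_nonneg_left hxk (pow_nonneg ht _)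
      _ = x ^ 2 * t ^ (k + 2) := mul_comm _ _
  have hsum : (∑' k : ℕ, (t * x) ^ (k + 2) / ((k + 2)! : ℝ)) ≤
      ∑' k : ℕ, x ^ 2 * (t ^ (k + 2) / (k + 2)!) := by
    refine (summable_shift (t * x) 2).tsum_le_tsum hterm ?_
    exact (summable_shift t 2).mul_left _
  rw [tsum_mul_left, ← h2] at hsum
  linarith [h1 ▸ hsum]

lemma fact_ge (k : ℕ) : (2 * 3 ^ k : ℝ) ≤ (k + 2)! := by
  induction k with
  | zero => norm_num
  | succ k ih =>
    have h3 : (3 : ℝ) ≤ (k + 3 : ℕ) := by push_cast; linarith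
    calc (2 * 3 ^ (k + 1) : ℝ) = 3 * (2 * 3 ^ k) := by ring
      _ ≤ (k + 3 : ℕ) * (k + 2)! := by
          apply mul_le_mul h3 ih (by positivity) (by positivity)
      _ = ((k + 1 + 2)! : ℝ) := by
          have h : (k + 3) * (k + 2)! = (k + 1 + 2)! := (Nat.factorial_succ (k + 2)).symm
          rw [← h]; push_cast; ring

lemma aux2 (t : ℝ) (ht : 0 ≤ t) (ht3 : t < 3) :
    Real.exp t - 1 - t ≤ t ^ 2 / (2 * (1 - t / 3)) := by
  rw [exp_sub_one_sub]
  have hgeo : Summable (fun k : ℕ => t ^ 2 / 2 * (t / 3) ^ k) := by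
    apply Summable.mul_left
    apply summable_geometric_of_lt_one (by positivity) (by linarith)
  have hterm : ∀ k : ℕ, t ^ (k + 2) / ((k + 2)! : ℝ) ≤ t ^ 2 / 2 * (t / 3) ^ k := by
    intro k
    have h1 : t ^ 2 / 2 * (t / 3) ^ k = t ^ (k + 2) / (2 * 3 ^ k) := by
      rw [div_pow, pow_add]; ring
    rw [h1]
    apply div_le_div_of_nonneg_left (by positivity) (by positivity) (fact_ge k)
  calc (∑' k : ℕ, t ^ (k + 2) / ((k + 2)! : ℝ)) ≤ ∑' k : ℕ, t ^ 2 / 2 * (t / 3) ^ k :=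
        (summable_shift t 2).tsum_le_tsum hterm hgeo
    _ = t ^ 2 / 2 * (1 - t / 3)⁻¹ := by
        rw [tsum_mul_left, tsum_geometric_of_lt_one (by positivity) (by linarith)]
    _ = t ^ 2 / (2 * (1 - t / 3)) := by
        rw [div_mul_eq_mul_div, mul_comm, ← div_div]
        ring_nf

lemma mgf_bound {Ω : Type*} [MeasurableSpace Ω] (μ : Measure Ω) [IsProbabilityMeasure μ]
    (g : Ω → ℝ) (hg : Measurable g) (hb : ∀ ω, |g ω| ≤ 1) (hmean : ∫ ω, g ω ∂μ = 0)
    (t : ℝ) (ht : 0 ≤ t) :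
    mgf g μ t ≤ Real.exp ((∫ ω, (g ω) ^ 2 ∂μ) * (Real.exp t - 1 - t)) := by
  have hgi : Integrable g μ := by
    refine (integrable_const (1 : ℝ)).mono' hg.aestronglyMeasurable (ae_of_all _ fun ω => ?_)
    simpa using hb ω
  have hg2i : Integrable (fun ω => (g ω) ^ 2) μ := by
    refine (integrable_const (1 : ℝ)).mono' (hg.pow_const 2).aestronglyMeasurable
      (ae_of_all _ fun ω => ?_)
    have := hb ω
    simp only [norm_pow, Real.norm_eq_abs]
    calc |g ω| ^ 2 ≤ 1 ^ 2 := by gcongr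
      _ = 1 := one_pow 2
  have hexpi : Integrable (fun ω => Real.exp (t * g ω)) μ := by
    refine (integrable_const (Real.exp t) ).mono'
      ((hg.const_mul t).exp).aestronglyMeasurable (ae_of_all _ fun ω => ?_)
    rw [Real.norm_eq_abs, abs_of_pos (Real.exp_pos _), Real.exp_le_exp]
    calc t * g ω ≤ t * 1 := mul_le_mul_of_nonneg_left ((le_abs_self _).trans (hb ω)) ht
      _ = t := mul_one t
  have hptw : ∀ ω, Real.exp (t * g ω) ≤ 1 + t * g ω + (g ω) ^ 2 * (Real.exp t - 1 - t) :=
    fun ω => aux1 t (g ω) ht (hb ω)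
  have h1 : mgf g μ t ≤ ∫ ω, (1 + t * g ω + (g ω) ^ 2 * (Real.exp t - 1 - t)) ∂μ := by
    refine integral_mono hexpi ?_ hptw
    exact ((integrable_const 1).add (hgi.const_mul t)).add (hg2i.mul_const _)
  have h2 : (∫ ω, (1 + t * g ω + (g ω) ^ 2 * (Real.exp t - 1 - t)) ∂μ)
      = 1 + (∫ ω, (g ω) ^ 2 ∂μ) * (Real.exp t - 1 - t) := by
    have hA : Integrable (fun ω => 1 + t * g ω) μ := (integrable_const 1).add (hgi.const_mul t)
    have hB : Integrable (fun ω => (g ω) ^ 2 * (Real.exp t - 1 - t)) μ := hg2i.mul_const _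
    have hC : Integrable (fun ω => t * g ω) μ := hgi.const_mul t
    rw [integral_add hA hB, integral_add (integrable_const 1) hC,
      integral_const, integral_const_mul, integral_mul_const, hmean]
    simp
  calc mgf g μ t ≤ 1 + (∫ ω, (g ω) ^ 2 ∂μ) * (Real.exp t - 1 - t) := h2 ▸ h1
    _ ≤ Real.exp ((∫ ω, (g ω) ^ 2 ∂μ) * (Real.exp t - 1 - t)) := by
        rw [add_comm]; exact Real.add_one_le_exp _

lemma map_eval {Ω : Type*} [MeasurableSpace Ω] (μ : Measure Ω) [IsProbabilityMeasure μ]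
    (m : ℕ) (i : Fin m) :
    (Measure.pi fun _ : Fin m => μ).map (fun ω => ω i) = μ := by
  ext s hs
  rw [Measure.map_apply (measurable_pi_apply i) hs, ← Set.univ_pi_update_univ, Measure.pi_pi]
  rw [Finset.prod_eq_single_of_mem i (Finset.mem_univ i)
    (fun j _ hj => by rw [Function.update_of_ne hj]; simp)]
  rw [Function.update_self]

lemma eval_iIndep {Ω : Type*} [MeasurableSpace Ω] (μ : Measure Ω) [IsProbabilityMeasure μ]
    (m : ℕ) :
    iIndepFun
      (fun i (ω : Fin m → Ω) => ω i) (Measure.pi fun _ : Fin m => μ) := by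
  classical
  rw [iIndepFun_iff_measure_inter_preimage_eq_mul]
  intro S sets hS
  have h1 : (⋂ i ∈ S, (fun ω : Fin m → Ω => ω i) ⁻¹' sets i)
      = Set.pi Set.univ (fun i => if i ∈ S then sets i else Set.univ) := by
    ext ω
    simp only [Set.mem_iInter, Set.mem_preimage, Set.mem_pi, Set.mem_univ, true_implies]
    constructor
    · intro h i
      by_cases hi : i ∈ S <;> simp [hi, h i]
    · intro h i hi
      have := h i
      simpa [hi] using this
  rw [h1, Measure.pi_pi]
  have h2 : ∀ i : Fin m, μ (if i ∈ S then sets i else Set.univ)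
      = if i ∈ S then μ (sets i) else 1 := by
    intro i; split <;> simp
  simp_rw [h2]
  rw [Finset.prod_ite_mem Finset.univ S fun i => μ (sets i), Finset.univ_inter]
  refine Finset.prod_congr rfl fun i hi => ?_
  have h3 := Measure.map_apply (μ := Measure.pi fun _ : Fin m => μ)
    (measurable_pi_apply i) (hS i hi)
  rw [← h3, map_eval]

lemma mgf_coord {Ω : Type*} [MeasurableSpace Ω] (μ : Measure Ω) [IsProbabilityMeasure μ]
    (m : ℕ) (i : Fin m) (g : Ω → ℝ) (hg : Measurable g) (t : ℝ) :
    mgf (fun ω : Fin m → Ω => g (ω i)) (Measure.pi fun _ : Fin m => μ) t = mgf g μ t := by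
  unfold mgf
  have h := integral_map (μ := Measure.pi fun _ : Fin m => μ)
    (show Measurable (fun ω : Fin m → Ω => ω i) from measurable_pi_apply i).aemeasurable
    (f := fun x => Real.exp (t * g x)) ((hg.const_mul t).exp).aestronglyMeasurable
  rw [map_eval] at h
  exact h.symm

lemma tail_bound {Ω : Type*} [MeasurableSpace Ω] (μ : Measure Ω) [IsProbabilityMeasure μ]
    (m : ℕ) (hm : 0 < m) (g : Ω → ℝ) (hg : Measurable g) (hb : ∀ ω, |g ω| ≤ 1)
    (hmean : ∫ ω, g ω ∂μ = 0) (v : ℝ) (hv : 0 ≤ v) (hvar : ∫ ω, (g ω) ^ 2 ∂μ = v)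
    (G ε : ℝ) (hG : 0 < G) (hε : 0 < ε)
    (key : (m : ℝ) * ε ^ 2 = 2 * G / 3 * ε + 2 * G * v) :
    ((Measure.pi fun _ : Fin m => μ) {ω | (m : ℝ) * ε ≤ ∑ i, g (ω i)}).toReal
      ≤ Real.exp (-G) := by
  have hPMeas : IsProbabilityMeasure (Measure.pi fun _ : Fin m => μ) := inferInstance
  set X : Fin m → (Fin m → Ω) → ℝ := fun i ω => g (ω i) with hX
  have hXmeas : ∀ i, Measurable (X i) := fun i => hg.comp (measurable_pi_apply i)
  have hindep : iIndepFun X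
      (Measure.pi fun _ : Fin m => μ) :=
    (eval_iIndep μ m).comp (fun _ => g) (fun _ => hg)
  -- the generic Chernoff step for any 0 ≤ t
  have main : ∀ t : ℝ, 0 ≤ t →
      ((Measure.pi fun _ : Fin m => μ) {ω | (m : ℝ) * ε ≤ ∑ i, g (ω i)}).toReal
        ≤ Real.exp (-(t * ((m : ℝ) * ε)) + m * (v * (Real.exp t - 1 - t))) := by
    intro t ht
    have hint : ∀ i : Fin m, Integrable
        (fun ω : Fin m → Ω => Real.exp (t * X i ω)) (Measure.pi fun _ : Fin m => μ) := by
      intro i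
      refine (integrable_const (Real.exp t)).mono'
        (((hXmeas i).const_mul t).exp).aestronglyMeasurable (ae_of_all _ fun ω => ?_)
      rw [Real.norm_eq_abs, abs_of_pos (Real.exp_pos _), Real.exp_le_exp]
      calc t * X i ω ≤ t * 1 :=
            mul_le_mul_of_nonneg_left ((le_abs_self _).trans (hb (ω i))) ht
        _ = t := mul_one t
    have hintsum : Integrable
        (fun ω : Fin m → Ω => Real.exp (t * (∑ i, X i) ω)) (Measure.pi fun _ : Fin m => μ) :=
      iIndepFun.integrable_exp_mul_sum hindep hXmeas (fun i _ => hint i)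
    have hchern := measure_ge_le_exp_mul_mgf (μ := Measure.pi fun _ : Fin m => μ)
      (X := ∑ i, X i) ((m : ℝ) * ε) ht hintsum
    have hset : {ω : Fin m → Ω | (m : ℝ) * ε ≤ (∑ i, X i) ω}
        = {ω : Fin m → Ω | (m : ℝ) * ε ≤ ∑ i, g (ω i)} := by
      ext ω; simp [hX, Finset.sum_apply]
    rw [hset] at hchern
    have hmgf : mgf (∑ i, X i) (Measure.pi fun _ : Fin m => μ) t
        ≤ Real.exp (m * (v * (Real.exp t - 1 - t))) := by
      rw [iIndepFun.mgf_sum hindep hXmeas]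
      have hone : ∀ i : Fin m, mgf (X i) (Measure.pi fun _ : Fin m => μ) t = mgf g μ t :=
        fun i => mgf_coord μ m i g hg t
      calc (∏ i, mgf (X i) (Measure.pi fun _ : Fin m => μ) t)
          = (mgf g μ t) ^ m := by
            rw [Finset.prod_congr rfl fun i _ => hone i]
            simp [Finset.prod_const, Finset.card_univ]
        _ ≤ (Real.exp (v * (Real.exp t - 1 - t))) ^ m := by
            gcongr
            · exact mgf_nonneg
            · exact hvar ▸ mgf_bound μ g hg hb hmean t ht
        _ = Real.exp (m * (v * (Real.exp t - 1 - t))) := by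
            rw [← Real.exp_nat_mul]
    calc ((Measure.pi fun _ : Fin m => μ) {ω | (m : ℝ) * ε ≤ ∑ i, g (ω i)}).toReal
        ≤ Real.exp (-t * ((m : ℝ) * ε)) * mgf (∑ i, X i) (Measure.pi fun _ : Fin m => μ) t :=
          hchern
      _ ≤ Real.exp (-t * ((m : ℝ) * ε)) * Real.exp (m * (v * (Real.exp t - 1 - t))) := by
          gcongr
      _ = Real.exp (-(t * ((m : ℝ) * ε)) + m * (v * (Real.exp t - 1 - t))) := by
          rw [← Real.exp_add]; ring_nf
  by_cases hv0 : v = 0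
  · -- use t = 3/2
    have h := main (3 / 2) (by norm_num)
    have hme : (m : ℝ) * ε = 2 * G / 3 := by
      have h2 : (m : ℝ) * ε * ε = 2 * G / 3 * ε := by
        rw [hv0] at key; nlinarith [key]
      have := mul_right_cancel₀ (ne_of_gt hε) h2
      linarith
    refine h.trans ?_
    rw [hv0]
    rw [Real.exp_le_exp]
    rw [hme]
    ring_nf
    nlinarith [hG]
  · have hvpos : 0 < v := lt_of_le_of_ne hv (Ne.symm hv0)
    set D : ℝ := v + ε / 3 with hD
    have hDpos : 0 < D := by positivity
    set t : ℝ := ε / D with ht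
    have htpos : 0 < t := by positivity
    have ht3 : t < 3 := by
      rw [ht, div_lt_iff₀ hDpos, hD]
      nlinarith [hvpos]
    have key2 : (m : ℝ) * ε ^ 2 = 2 * G * D := by rw [hD]; linarith [key]
    have h := main t htpos.le
    refine h.trans ?_
    rw [Real.exp_le_exp]
    have hψ : Real.exp t - 1 - t ≤ t ^ 2 / (2 * (1 - t / 3)) := aux2 t htpos.le ht3
    have h1mt : 1 - t / 3 = v / D := by
      rw [ht, hD]; field_simp; ring
    have hψ2 : t ^ 2 / (2 * (1 - t / 3)) = ε ^ 2 / (2 * v * D) := by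
      rw [h1mt, ht]
      field_simp
    have hvψ : v * (Real.exp t - 1 - t) ≤ ε ^ 2 / (2 * D) := by
      calc v * (Real.exp t - 1 - t) ≤ v * (ε ^ 2 / (2 * v * D)) :=
            mul_le_mul_of_nonneg_left (hψ.trans hψ2.le) hv
        _ = ε ^ 2 / (2 * D) := by field_simp
    have hterm2 : (m : ℝ) * (v * (Real.exp t - 1 - t)) ≤ G := by
      calc (m : ℝ) * (v * (Real.exp t - 1 - t)) ≤ (m : ℝ) * (ε ^ 2 / (2 * D)) :=
            mul_le_mul_of_nonneg_left hvψ (Nat.cast_nonneg m)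
        _ = (m : ℝ) * ε ^ 2 / (2 * D) := by ring
        _ = G := by rw [key2]; field_simp
    have hterm1 : t * ((m : ℝ) * ε) = 2 * G := by
      rw [ht, div_mul_eq_mul_div, div_eq_iff (ne_of_gt hDpos)]
      nlinarith [key2]
    linarith [hterm1, hterm2]

theorem stmt4 {Ω : Type*} [MeasurableSpace Ω] (μ : Measure Ω) [IsProbabilityMeasure μ]
    (m n : ℕ) (hm : 0 < m) (hn : 0 < n)
    (f : Ω → ℝ) (hf : Measurable f) (hbdd : ∀ ω, f ω ∈ Set.Icc (0:ℝ) 1)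
    (LD V₁ V₂ : ℝ) (hV₁ : 0 ≤ V₁) (hV₂ : 0 ≤ V₂)
    (hmean : ∫ ω, f ω ∂μ = LD)
    (hvar : variance f μ = (1 / n) * V₁ + V₂)
    (δ : ℝ) (hδ : δ ∈ Set.Ioc (0:ℝ) 1) :
    ENNReal.ofReal (1 - δ) ≤
      (Measure.pi fun _ : Fin m => μ)
        {ω | |LD - (1 / m : ℝ) * ∑ i, f (ω i)| ≤
          (1 / (3 * m)) * (Real.log (2 / δ) +
            Real.sqrt ((Real.log (2 / δ)) ^ 2 +
              18 * Real.log (2 / δ) * m * ((1 / n) * V₁ + V₂)))} := by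
  obtain ⟨hδ0, hδ1⟩ := hδ
  have hmR : (0 : ℝ) < m := by exact_mod_cast hm
  set v : ℝ := (1 / n) * V₁ + V₂ with hvdef
  have hv : 0 ≤ v := hvar ▸ variance_nonneg f μ
  set G : ℝ := Real.log (2 / δ) with hGdef
  have hG : 0 < G := Real.log_pos (by rw [lt_div_iff₀ hδ0]; linarith)
  set ε : ℝ := (1 / (3 * m)) * (G + Real.sqrt (G ^ 2 + 18 * G * m * v)) with hεdef
  have hsq : 0 ≤ G ^ 2 + 18 * G * m * v := by
    have : 0 ≤ 18 * G * m * v := by positivity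
    nlinarith [sq_nonneg G]
  have hs := Real.sq_sqrt hsq
  have hsnn := Real.sqrt_nonneg (G ^ 2 + 18 * G * m * v)
  have hε : 0 < ε := by
    rw [hεdef]; positivity
  have key : (m : ℝ) * ε ^ 2 = 2 * G / 3 * ε + 2 * G * v := by
    rw [hεdef]
    generalize Real.sqrt (G ^ 2 + 18 * G * m * v) = S at hs hsnn ⊢
    field_simp
    nlinarith [hs, hmR]
  -- properties of f and the centered function
  have fint : Integrable f μ := by
    refine (integrable_const (1 : ℝ)).mono' hf.aestronglyMeasurable (ae_of_all _ fun ω => ?_)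
    rw [Real.norm_eq_abs, abs_le]
    exact ⟨by linarith [(hbdd ω).1], (hbdd ω).2⟩
  have hLD0 : 0 ≤ LD := hmean ▸ integral_nonneg fun ω => (hbdd ω).1
  have hLD1 : LD ≤ 1 := by
    rw [← hmean]
    calc ∫ ω, f ω ∂μ ≤ ∫ _ω, (1 : ℝ) ∂μ :=
          integral_mono fint (integrable_const 1) fun ω => (hbdd ω).2
      _ = 1 := by simp
  set g : Ω → ℝ := fun ω => f ω - LD with hgdef
  have hgmeas : Measurable g := hf.sub measurable_const
  have hgb : ∀ ω, |g ω| ≤ 1 := fun ω =>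
    abs_le.2 ⟨by simp only [hgdef]; linarith [(hbdd ω).1], by simp only [hgdef]; linarith [(hbdd ω).2]⟩
  have hgmean : ∫ ω, g ω ∂μ = 0 := by
    rw [hgdef]
    rw [integral_sub fint (integrable_const LD), hmean, integral_const]
    simp
  have hmem2 : MemLp f 2 μ := by
    refine MemLp.of_bound hf.aestronglyMeasurable 1 (ae_of_all _ fun ω => ?_)
    rw [Real.norm_eq_abs, abs_le]
    exact ⟨by linarith [(hbdd ω).1], (hbdd ω).2⟩
  have hgvar : ∫ ω, (g ω) ^ 2 ∂μ = v := by
    rw [← hvar, variance_eq_integral hmem2.aemeasurable, hmean]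
  -- the two tail events
  have htail1 := tail_bound μ m hm g hgmeas hgb hgmean v hv hgvar G ε hG hε key
  have hgneg : ∀ ω, |(-g) ω| ≤ 1 := fun ω => by rw [Pi.neg_apply, abs_neg]; exact hgb ω
  have htail2 := tail_bound μ m hm (-g) hgmeas.neg hgneg
    (by rw [integral_neg']; simp [hgmean]) v hv
    (by simp only [Pi.neg_apply, neg_sq]; exact hgvar) G ε hG hε key
  -- measurability of the main event
  have hsummeas : Measurable fun ω : Fin m → Ω => ∑ i, f (ω i) :=
    Finset.measurable_sum Finset.univ fun i _ => hf.comp (measurable_pi_apply i)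
  have hAmeas : MeasurableSet {ω : Fin m → Ω | |LD - (1 / m : ℝ) * ∑ i, f (ω i)| ≤ ε} :=
    measurableSet_le ((measurable_const.sub (hsummeas.const_mul _)).abs) measurable_const
  -- inclusion of the complement in the union of tails
  have hsub : {ω : Fin m → Ω | |LD - (1 / m : ℝ) * ∑ i, f (ω i)| ≤ ε}ᶜ ⊆
      {ω : Fin m → Ω | (m : ℝ) * ε ≤ ∑ i, g (ω i)} ∪
      {ω : Fin m → Ω | (m : ℝ) * ε ≤ ∑ i, (-g) (ω i)} := by
    intro ω hω
    simp only [Set.mem_compl_iff, Set.mem_setOf_eq, not_le] at hω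
    have hsumg : ∑ i, g (ω i) = (∑ i, f (ω i)) - m * LD := by
      rw [hgdef]
      rw [Finset.sum_sub_distrib]
      simp [Finset.card_univ, mul_comm]
    rcases lt_abs.1 hω with h | h
    · right
      simp only [Set.mem_setOf_eq, Pi.neg_apply]
      have : ∑ i, -g (ω i) = m * LD - ∑ i, f (ω i) := by
        rw [Finset.sum_neg_distrib, hsumg]; ring
      rw [this]
      have h3 : (m : ℝ) * (1 / m * ∑ i, f (ω i)) = ∑ i, f (ω i) := by
        field_simp
      have h2 := mul_lt_mul_of_pos_left h hmR
      rw [mul_sub, h3] at h2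
      linarith
    · left
      simp only [Set.mem_setOf_eq]
      rw [hsumg]
      rw [neg_sub] at h
      have h3 : (m : ℝ) * (1 / m * ∑ i, f (ω i)) = ∑ i, f (ω i) := by
        field_simp
      have h2 := mul_lt_mul_of_pos_left h hmR
      rw [mul_sub, h3] at h2
      linarith
  -- assemble
  set Pi : Measure (Fin m → Ω) := Measure.pi fun _ : Fin m => μ with hPidef
  have hBle : ∀ B : Set (Fin m → Ω), Pi B ≤ ENNReal.ofReal ((Pi B).toReal) := by
    intro B
    rw [ENNReal.ofReal_toReal (measure_ne_top _ _)]
  have hcompl : Pi {ω : Fin m → Ω | |LD - (1 / m : ℝ) * ∑ i, f (ω i)| ≤ ε}ᶜ ≤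
      ENNReal.ofReal δ := by
    calc Pi _ᶜ ≤ Pi ({ω : Fin m → Ω | (m : ℝ) * ε ≤ ∑ i, g (ω i)} ∪
          {ω : Fin m → Ω | (m : ℝ) * ε ≤ ∑ i, (-g) (ω i)}) := measure_mono hsub
      _ ≤ Pi {ω : Fin m → Ω | (m : ℝ) * ε ≤ ∑ i, g (ω i)} +
          Pi {ω : Fin m → Ω | (m : ℝ) * ε ≤ ∑ i, (-g) (ω i)} := measure_union_le _ _
      _ ≤ ENNReal.ofReal (Real.exp (-G)) + ENNReal.ofReal (Real.exp (-G)) := by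
          gcongr
          · exact (hBle _).trans (ENNReal.ofReal_le_ofReal htail1)
          · exact (hBle _).trans (ENNReal.ofReal_le_ofReal htail2)
      _ = ENNReal.ofReal δ := by
          rw [← ENNReal.ofReal_add (Real.exp_pos _).le (Real.exp_pos _).le]
          congr 1
          rw [hGdef, Real.exp_neg, Real.exp_log (by positivity)]
          field_simp
          norm_num
  have hfinal : ENNReal.ofReal (1 - δ) ≤
      Pi {ω : Fin m → Ω | |LD - (1 / m : ℝ) * ∑ i, f (ω i)| ≤ ε} := by
    have h1 : Pi {ω : Fin m → Ω | |LD - (1 / m : ℝ) * ∑ i, f (ω i)| ≤ ε} =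
        1 - Pi {ω : Fin m → Ω | |LD - (1 / m : ℝ) * ∑ i, f (ω i)| ≤ ε}ᶜ := by
      have := prob_compl_eq_one_sub (μ := Pi) hAmeas
      rw [this]
      rw [ENNReal.sub_sub_cancel ENNReal.one_ne_top prob_le_one]
    rw [h1]
    calc ENNReal.ofReal (1 - δ) = 1 - ENNReal.ofReal δ := by
          rw [ENNReal.ofReal_sub 1 hδ0.le, ENNReal.ofReal_one]
      _ ≤ 1 - Pi {ω : Fin m → Ω | |LD - (1 / m : ℝ) * ∑ i, f (ω i)| ≤ ε}ᶜ :=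
          tsub_le_tsub_left hcompl 1
  exact hfinal
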